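/- Let v be a discrete valuation on a field K. The v-adic logarithmic distance δ_v on ℙ¹(K) satisfies the triangle-type inequality δ_v(P₁,P₃) ≥ min(δ_v(P₁,P₂), δ_v(P₂,P₃)) for all P₁, P₂, P₃ ∈ ℙ¹(K). -/

import Mathlib

private lemma logDist_arith (a b c : WithTop ℤ) (m₁ m₂ m₃ : ℤ)
    (h : min ((m₁ : WithTop ℤ) + c) ((m₃ : WithTop ℤ) + b) ≤ (m₂ : WithTop ℤ) + a) :
    min (b - m₁ - m₂) (c - m₂ - m₃) ≤ a - m₁ - m₃ := by
  induction a using WithTop.recTopCoe with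
  | top => simp [WithTop.LinearOrderedAddCommGroup.top_sub]
  | coe a =>
    induction b using WithTop.recTopCoe with
    | top =>
      induction c using WithTop.recTopCoe with
      | top => simp at h
      | coe c =>
        refine min_le_of_right_le ?_
        rw [add_top, min_le_iff] at h
        rcases h with h | h
        · simp only [← WithTop.coe_add, ← WithTop.LinearOrderedAddCommGroup.coe_sub,
            WithTop.coe_le_coe] at h ⊢
          omega
        · simp [top_le_iff, ← WithTop.coe_add] at h
    | coe b =>
      induction c using WithTop.recTopCoe with
      | top =>
        refine min_le_of_left_le ?_
        rw [add_top, min_comm, min_le_iff] at h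
        rcases h with h | h
        · simp only [← WithTop.coe_add, ← WithTop.LinearOrderedAddCommGroup.coe_sub,
            WithTop.coe_le_coe] at h ⊢
          omega
        · simp [top_le_iff, ← WithTop.coe_add] at h
      | coe c =>
        simp only [← WithTop.coe_add, ← WithTop.LinearOrderedAddCommGroup.coe_sub,
          ← WithTop.coe_min, WithTop.coe_le_coe, min_le_iff, le_min_iff] at h ⊢
        omega



/-- The `v`-adic logarithmic distance between two points of `ℙ¹(K)` given in homogeneous
coordinates: `δ_v(P,Q) = v(x₁y₂ - x₂y₁) - min(v x₁, v y₁) - min(v x₂, v y₂)`. -/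
noncomputable def logDist {K : Type*} [Field K] (v : K → WithTop ℤ) (P Q : K × K) : WithTop ℤ :=
  v (P.1 * Q.2 - Q.1 * P.2) - min (v P.1) (v P.2) - min (v Q.1) (v Q.2)

/-- The `v`-adic logarithmic distance satisfies the ultrametric triangle-type inequality
`δ_v(P₁,P₃) ≥ min (δ_v(P₁,P₂), δ_v(P₂,P₃))`. -/
theorem logDist_triangle {K : Type*} [Field K] (v : K → WithTop ℤ)
    (hv0 : ∀ x : K, v x = ⊤ ↔ x = 0)
    (hvmul : ∀ x y : K, v (x * y) = v x + v y)
    (hvadd : ∀ x y : K, min (v x) (v y) ≤ v (x + y))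
    (hvsurj : ∀ n : ℤ, ∃ x : K, v x = (n : WithTop ℤ))
    (P₁ P₂ P₃ : K × K) (h₁ : P₁ ≠ 0) (h₂ : P₂ ≠ 0) (h₃ : P₃ ≠ 0) :
    min (logDist v P₁ P₂) (logDist v P₂ P₃) ≤ logDist v P₁ P₃ := by
  -- the minimal valuations of the coordinates are finite
  have hm : ∀ P : K × K, P ≠ 0 → ∃ n : ℤ, min (v P.1) (v P.2) = (n : WithTop ℤ) := by
    intro P hP
    have : min (v P.1) (v P.2) ≠ ⊤ := by
      intro h
      rw [min_eq_top, hv0, hv0] at h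
      exact hP (Prod.ext h.1 h.2)
    exact WithTop.ne_top_iff_exists.mp this |>.imp fun n hn => hn.symm
  obtain ⟨n₁, hn₁⟩ := hm P₁ h₁
  obtain ⟨n₂, hn₂⟩ := hm P₂ h₂
  obtain ⟨n₃, hn₃⟩ := hm P₃ h₃
  -- key ultrametric inequality on determinants
  have key : min ((n₁ : WithTop ℤ) + v (P₂.1 * P₃.2 - P₃.1 * P₂.2))
      ((n₃ : WithTop ℤ) + v (P₁.1 * P₂.2 - P₂.1 * P₁.2)) ≤
      (n₂ : WithTop ℤ) + v (P₁.1 * P₃.2 - P₃.1 * P₁.2) := by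
    rcases min_choice (v P₂.1) (v P₂.2) with hc | hc
    · -- m₂ = v x₂
      calc min ((n₁ : WithTop ℤ) + v (P₂.1 * P₃.2 - P₃.1 * P₂.2))
            ((n₃ : WithTop ℤ) + v (P₁.1 * P₂.2 - P₂.1 * P₁.2))
          ≤ min (v P₁.1 + v (P₂.1 * P₃.2 - P₃.1 * P₂.2))
            (v P₃.1 + v (P₁.1 * P₂.2 - P₂.1 * P₁.2)) := by
            refine min_le_min (add_le_add_left ?_ _) (add_le_add_left ?_ _)
            · rw [← hn₁]; exact min_le_left _ _
            · rw [← hn₃]; exact min_le_left _ _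
        _ = min (v (P₁.1 * (P₂.1 * P₃.2 - P₃.1 * P₂.2)))
            (v (P₃.1 * (P₁.1 * P₂.2 - P₂.1 * P₁.2))) := by rw [hvmul, hvmul]
        _ ≤ v (P₁.1 * (P₂.1 * P₃.2 - P₃.1 * P₂.2) + P₃.1 * (P₁.1 * P₂.2 - P₂.1 * P₁.2)) :=
            hvadd _ _
        _ = (n₂ : WithTop ℤ) + v (P₁.1 * P₃.2 - P₃.1 * P₁.2) := by
            rw [← hn₂, hc, ← hvmul]
            ring_nf
    · -- m₂ = v y₂
      calc min ((n₁ : WithTop ℤ) + v (P₂.1 * P₃.2 - P₃.1 * P₂.2))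
            ((n₃ : WithTop ℤ) + v (P₁.1 * P₂.2 - P₂.1 * P₁.2))
          ≤ min (v P₁.2 + v (P₂.1 * P₃.2 - P₃.1 * P₂.2))
            (v P₃.2 + v (P₁.1 * P₂.2 - P₂.1 * P₁.2)) := by
            refine min_le_min (add_le_add_left ?_ _) (add_le_add_left ?_ _)
            · rw [← hn₁]; exact min_le_right _ _
            · rw [← hn₃]; exact min_le_right _ _
        _ = min (v (P₁.2 * (P₂.1 * P₃.2 - P₃.1 * P₂.2)))
            (v (P₃.2 * (P₁.1 * P₂.2 - P₂.1 * P₁.2))) := by rw [hvmul, hvmul]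
        _ ≤ v (P₁.2 * (P₂.1 * P₃.2 - P₃.1 * P₂.2) + P₃.2 * (P₁.1 * P₂.2 - P₂.1 * P₁.2)) :=
            hvadd _ _
        _ = (n₂ : WithTop ℤ) + v (P₁.1 * P₃.2 - P₃.1 * P₁.2) := by
            rw [← hn₂, hc, ← hvmul]
            ring_nf
  unfold logDist
  rw [hn₁, hn₂, hn₃]
  exact logDist_arith _ _ _ _ _ _ key
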